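/- For every integer k ≥ 1, M_k ≤ π / (2√2), where M_k = √π · 2^(k−1) · Γ(k/2 + 1)^2 / Γ(k + 3/2); that is, the expected number of iterations per accepted sample of the rejection sampler is at most π/(2√2) ≈ 1.11 for all k ≥ 1. -/
import Mathlib


open Real

lemma gamma_sq_le_aux (x : ℝ) (hx : 0 ≤ x) :
    Gamma (x + 1) ^ 2 ≤ Gamma (x + 3 / 4) * Gamma (x + 5 / 4) := by
  have ha : (0 : ℝ) < x + 3 / 4 := by linarith
  have hb : (0 : ℝ) < x + 5 / 4 := by linarith
  have hga := Real.Gamma_pos_of_pos ha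
  have hgb := Real.Gamma_pos_of_pos hb
  have hgm := Real.Gamma_pos_of_pos (show (0:ℝ) < x + 1 by linarith)
  have h := Real.convexOn_log_Gamma.2 (Set.mem_Ioi.mpr ha) (Set.mem_Ioi.mpr hb)
    (by norm_num : (0:ℝ) ≤ 1/2) (by norm_num : (0:ℝ) ≤ 1/2) (by norm_num)
  have hmid : (1/2 : ℝ) • (x + 3/4) + (1/2 : ℝ) • (x + 5/4) = x + 1 := by
    simp only [smul_eq_mul]; ring
  rw [hmid] at h
  simp only [Function.comp_apply, smul_eq_mul] at h
  have h2 : Real.log (Gamma (x+1) ^ 2) ≤ Real.log (Gamma (x+3/4) * Gamma (x+5/4)) := by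
    rw [Real.log_pow, Real.log_mul hga.ne' hgb.ne']
    push_cast
    linarith
  exact (Real.log_le_log_iff (by positivity) (by positivity)).mp h2

theorem Mk_le_limit (k : ℕ) (hk : 1 ≤ k) :
    Real.sqrt π * 2 ^ (k - 1) * Gamma ((k : ℝ) / 2 + 1) ^ 2 / Gamma ((k : ℝ) + 3 / 2) ≤
      π / (2 * Real.sqrt 2) := by
  set x : ℝ := (k : ℝ) / 2 with hxdef
  have hx : 0 ≤ x := by positivity
  have hdup := Real.Gamma_mul_Gamma_add_half (x + 3/4)
  have h2s : 2 * (x + 3/4) = (k : ℝ) + 3/2 := by rw [hxdef]; ring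
  have h34 : x + 3/4 + 1/2 = x + 5/4 := by ring
  rw [h2s, h34, show (1:ℝ) - ((k:ℝ) + 3/2) = -((k:ℝ) + 1/2) by ring] at hdup
  have hGpos : 0 < Gamma ((k : ℝ) + 3/2) :=
    Real.Gamma_pos_of_pos (by positivity)
  have hconv : Gamma ((k : ℝ)/2 + 1) ^ 2 ≤ Gamma (x + 3/4) * Gamma (x + 5/4) :=
    gamma_sq_le_aux x hx
  have hkey : Real.sqrt π * 2 ^ (k - 1) * Gamma ((k : ℝ) / 2 + 1) ^ 2 / Gamma ((k : ℝ) + 3 / 2)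
      ≤ Real.sqrt π * 2 ^ (k - 1) * (Gamma ((k : ℝ) + 3/2) * (2:ℝ) ^ (-((k:ℝ) + 1/2)) * Real.sqrt π)
        / Gamma ((k : ℝ) + 3 / 2) := by
    rw [← hdup]
    gcongr
  refine hkey.trans_eq ?_
  have hsπ : Real.sqrt π * Real.sqrt π = π := Real.mul_self_sqrt pi_pos.le
  have hpow : (2:ℝ) ^ (k - 1) * (2:ℝ) ^ (-((k:ℝ) + 1/2)) = (2:ℝ) ^ (-(3/2) : ℝ) := by
    have hnat : ((2:ℝ) ^ (k-1) : ℝ) = (2:ℝ) ^ ((k:ℝ) - 1) := by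
      rw [← Real.rpow_natCast 2 (k-1)]
      congr 1
      have := Nat.cast_sub hk (R := ℝ)
      simp at this
      rw [this]
    rw [hnat, ← Real.rpow_add (by norm_num)]
    congr 1
    ring
  have h232 : (2:ℝ) ^ (-(3/2) : ℝ) = 1 / (2 * Real.sqrt 2) := by
    rw [Real.rpow_neg (by norm_num : (0:ℝ) ≤ 2)]
    rw [show ((3/2) : ℝ) = 1 + 1/2 by norm_num, Real.rpow_add (by norm_num), Real.rpow_one,
      ← Real.sqrt_eq_rpow, one_div]
  have hG : Gamma ((k:ℝ) + 3/2) ≠ 0 := hGpos.ne'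
  rw [div_eq_iff hG]
  calc Real.sqrt π * 2 ^ (k - 1) * (Gamma ((k:ℝ) + 3/2) * (2:ℝ) ^ (-((k:ℝ) + 1/2)) * Real.sqrt π)
      = (Real.sqrt π * Real.sqrt π) * ((2:ℝ) ^ (k-1) * (2:ℝ) ^ (-((k:ℝ) + 1/2))) *
        Gamma ((k:ℝ) + 3/2) := by ring
    _ = π * (1 / (2 * Real.sqrt 2)) * Gamma ((k:ℝ) + 3/2) := by rw [hsπ, hpow, h232]
    _ = π / (2 * Real.sqrt 2) * Gamma ((k:ℝ) + 3/2) := by ring
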